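/- arXiv:1803.06341 — 7 statements merged into one kernel-verified Lean document; each statement's English description precedes it below -/
import Mathlib

section
/- Let H be a history satisfying uniqueness of written values, containing a transaction WOT whose write events are exactly w(X)x and w(Y)y for two distinct objects X and Y. Suppose the local history of a client C_r contains a transaction ROT with read events r(X)a and r(Y)b, and strictly later a transaction ROT2 with read events r(X)x and r(Y)y. Then for every transactional causal serialization for C_r of H, a = x if and only if b = y; that is, the read-only transaction ROT returns the value x written by the write-only transaction WOT if and only if it returns the value y written by WOT. -/
/-!
Combinatorial model of transactional histories.
-/

/-- A transaction: a finite set of read events `(x, v)` (read of object `x`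
returning value `v`) and a finite set of write events `(x, v)` (write of
value `v` to object `x`). -/
structure Tx (Obj : Type*) (Val : Type*) where
  reads : Set (Obj × Val)
  writes : Set (Obj × Val)
  reads_finite : reads.Finite
  writes_finite : writes.Finite

/-- A history: a set of clients, each with a finite sequence (list) of
transactions — its local history. -/
structure History (Client : Type*) (Obj : Type*) (Val : Type*) where
  locals : Client → List (Tx Obj Val)

variable {Client Obj Val : Type*}

/-- `T` is a transaction of the history `H`. -/
def TxIn (H : History Client Obj Val) (T : Tx Obj Val) : Prop :=
  ∃ c : Client, T ∈ H.locals c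

/-- `S` occurs strictly before `T` in the local history of client `c`. -/
def LocBefore (H : History Client Obj Val) (c : Client) (S T : Tx Obj Val) : Prop :=
  ∃ i j : ℕ, i < j ∧ (H.locals c)[i]? = some S ∧ (H.locals c)[j]? = some T

/-- `T` contains a write event on object `x`. -/
def WritesOn (T : Tx Obj Val) (x : Obj) : Prop :=
  ∃ v : Val, (x, v) ∈ T.writes

/-- Uniqueness of written values: every value written by a write event of the
history is distinct from `bot` and from the value written by every other
write event in the history. -/
def UniqueWrites (H : History Client Obj Val) (bot : Val) : Prop :=
  (∀ T, TxIn H T → ∀ x v, (x, v) ∈ T.writes → v ≠ bot) ∧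
  (∀ T T', TxIn H T → TxIn H T' → ∀ x x' v,
      (x, v) ∈ T.writes → (x', v) ∈ T'.writes → T = T' ∧ x = x')

/-- The causality relation of a history: the smallest transitive relation such
that `S` causally precedes `T` whenever (i) `S` occurs strictly before `T` in
some client's local history, or (ii) `S` contains a write event `w(x)v` and
`T` contains the read event `r(x)v`. -/
inductive Causal (H : History Client Obj Val) : Tx Obj Val → Tx Obj Val → Prop
  | prog {S T : Tx Obj Val} (c : Client) : LocBefore H c S T → Causal H S T
  | readFrom {S T : Tx Obj Val} {x : Obj} {v : Val} :
      TxIn H S → TxIn H T → (x, v) ∈ S.writes → (x, v) ∈ T.reads → Causal H S T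
  | trans {S T U : Tx Obj Val} : Causal H S T → Causal H T U → Causal H S U

/-- The set of transactions over which a serialization for client `C` ranges:
all transactions of the history containing at least one write event, together
with all transactions of `C`'s local history. -/
def Dom (H : History Client Obj Val) (C : Client) : Set (Tx Obj Val) :=
  {T | (TxIn H T ∧ T.writes.Nonempty) ∨ T ∈ H.locals C}

/-- `lt` is a transactional causal serialization for client `C` of history `H`:
a strict linear order on `Dom H C` such that
(1) for every read event `r(x)v` with `v ≠ bot` in a transaction `T` of the
set, some transaction strictly preceding `T` contains a write event on `x`,
and the last such transaction contains the write event `w(x)v`;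
(2) for every read event `r(x)bot` in a transaction `T` of the set, no
transaction strictly preceding `T` contains a write event on `x`;
(3) whenever a transaction `S` of the set causally precedes a transaction `T`
of the set, `S` strictly precedes `T`. -/
structure IsCausalSerialization (H : History Client Obj Val) (bot : Val)
    (C : Client) (lt : Tx Obj Val → Tx Obj Val → Prop) : Prop where
  irrefl : ∀ T ∈ Dom H C, ¬ lt T T
  trans : ∀ S ∈ Dom H C, ∀ T ∈ Dom H C, ∀ U ∈ Dom H C, lt S T → lt T U → lt S U
  total : ∀ S ∈ Dom H C, ∀ T ∈ Dom H C, S ≠ T → lt S T ∨ lt T S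
  read_val : ∀ T ∈ Dom H C, ∀ x v, (x, v) ∈ T.reads → v ≠ bot →
      ∃ W ∈ Dom H C, lt W T ∧ (x, v) ∈ W.writes ∧
        ∀ W' ∈ Dom H C, lt W' T → WritesOn W' x → W' = W ∨ lt W' W
  read_bot : ∀ T ∈ Dom H C, ∀ x, (x, bot) ∈ T.reads →
      ∀ W ∈ Dom H C, lt W T → ¬ WritesOn W x
  causal_lt : ∀ S ∈ Dom H C, ∀ T ∈ Dom H C, Causal H S T → lt S T

theorem aux_key {Client Obj Val : Type*} (bot : Val)
    (H : History Client Obj Val) (hU : UniqueWrites H bot)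
    (WOT : Tx Obj Val) (hWOT : TxIn H WOT)
    (X Y : Obj) (x y : Val) (hXY : X ≠ Y)
    (hw : WOT.writes = {(X, x), (Y, y)})
    (Cr : Client) (ROT ROT2 : Tx Obj Val)
    (hord : LocBefore H Cr ROT ROT2)
    (c : Val)
    (hrc : (X, c) ∈ ROT.reads) (hr2x : (X, x) ∈ ROT2.reads)
    (lt : Tx Obj Val → Tx Obj Val → Prop)
    (hser : IsCausalSerialization H bot Cr lt) :
    c = x ↔ lt WOT ROT := by
  have hmemwx : (X, x) ∈ WOT.writes := by rw [hw]; left; rfl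
  have hDW : WOT ∈ Dom H Cr := Or.inl ⟨hWOT, ⟨(X, x), hmemwx⟩⟩
  obtain ⟨i, j, hij, hi, hj⟩ := hord
  have hROTm : ROT ∈ H.locals Cr := by
    have := List.getElem?_eq_some_iff.mp hi
    obtain ⟨h1, h2⟩ := this
    exact h2 ▸ List.getElem_mem h1
  have hROT2m : ROT2 ∈ H.locals Cr := by
    have := List.getElem?_eq_some_iff.mp hj
    obtain ⟨h1, h2⟩ := this
    exact h2 ▸ List.getElem_mem h1
  have hDR : ROT ∈ Dom H Cr := Or.inr hROTm
  have hDR2 : ROT2 ∈ Dom H Cr := Or.inr hROT2m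
  have htxin : ∀ T ∈ Dom H Cr, TxIn H T := fun T hT =>
    hT.elim And.left (fun h => ⟨Cr, h⟩)
  have hxbot : x ≠ bot := hU.1 WOT hWOT X x hmemwx
  have hu : ∀ W, TxIn H W → (X, x) ∈ W.writes → W = WOT := fun W hW hm =>
    (hU.2 W WOT hW hWOT X X x hm hmemwx).1
  have hWon : WritesOn WOT X := ⟨x, hmemwx⟩
  have hR2 : lt ROT ROT2 :=
    hser.causal_lt ROT hDR ROT2 hDR2 (Causal.prog Cr ⟨i, j, hij, hi, hj⟩)
  have hW2 : lt WOT ROT2 :=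
    hser.causal_lt WOT hDW ROT2 hDR2
      (Causal.readFrom hWOT ⟨Cr, hROT2m⟩ hmemwx hr2x)
  obtain ⟨W, hWD, hWlt, hWw, hmax⟩ := hser.read_val ROT2 hDR2 X x hr2x hxbot
  have hWeq : W = WOT := hu W (htxin W hWD) hWw
  rw [hWeq] at hWlt hWw hmax
  constructor
  · rintro rfl
    obtain ⟨W', hW'D, hW'lt, hW'w, _⟩ := hser.read_val ROT hDR X c hrc hxbot
    have : W' = WOT := hu W' (htxin W' hW'D) hW'w
    exact this ▸ hW'lt
  · intro hWR
    have hcbot : c ≠ bot := by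
      rintro rfl
      exact hser.read_bot ROT hDR X hrc WOT hDW hWR hWon
    obtain ⟨W', hW'D, hW'lt, hW'w, hmaxR⟩ := hser.read_val ROT hDR X c hrc hcbot
    rcases hmaxR WOT hDW hWR hWon with heq | hlt
    · have : (X, c) ∈ WOT.writes := heq ▸ hW'w
      rw [hw, Set.mem_insert_iff, Set.mem_singleton_iff, Prod.mk.injEq,
        Prod.mk.injEq] at this
      rcases this with ⟨_, h⟩ | ⟨h, _⟩
      · exact h
      · exact absurd h hXY
    · exfalso
      have hW'2 : lt W' ROT2 := hser.trans W' hW'D ROT hDR ROT2 hDR2 hW'lt hR2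
      rcases hmax W' hW'D hW'2 ⟨c, hW'w⟩ with heq | hlt'
      · exact hser.irrefl WOT hDW (heq ▸ hlt)
      · exact hser.irrefl WOT hDW (hser.trans WOT hDW W' hW'D WOT hDW hlt hlt')

/-- a read-only transaction `ROT` returns the value `x` written
by the write-only transaction `WOT` if and only if it returns the value `y`
written by `WOT`. -/
theorem stmt_0 {Client Obj Val : Type*} (bot : Val)
    (H : History Client Obj Val) (hU : UniqueWrites H bot)
    (WOT : Tx Obj Val) (hWOT : TxIn H WOT)
    (X Y : Obj) (x y : Val) (hXY : X ≠ Y)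
    (hw : WOT.writes = {(X, x), (Y, y)})
    (Cr : Client) (ROT ROT2 : Tx Obj Val)
    (hord : LocBefore H Cr ROT ROT2)
    (a b : Val)
    (hra : (X, a) ∈ ROT.reads) (hrb : (Y, b) ∈ ROT.reads)
    (hr2x : (X, x) ∈ ROT2.reads) (hr2y : (Y, y) ∈ ROT2.reads)
    (lt : Tx Obj Val → Tx Obj Val → Prop)
    (hser : IsCausalSerialization H bot Cr lt) :
    a = x ↔ b = y := by
  have h1 := aux_key bot H hU WOT hWOT X Y x y hXY hw Cr ROT ROT2 hord a hra hr2x lt hser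
  have h2 := aux_key bot H hU WOT hWOT Y X y x hXY.symm (hw.trans (Set.pair_comm _ _))
    Cr ROT ROT2 hord b hrb hr2y lt hser
  rw [h1, h2]
end

section
/- Let H be a history satisfying uniqueness of written values, containing a transaction WOT whose write events are exactly w(X)x and w(Y)y for two distinct objects X and Y. Suppose a transaction ROT in the local history of a client C_r contains the read events r(X)a and r(Y)y, i.e., ROT returns WOT's value y for object Y. Then in every transactional causal serialization for C_r of H: WOT strictly precedes ROT in the serialization order, the value a is not ⊥, and the last transaction strictly preceding ROT that contains a write event on X either equals WOT or strictly follows WOT in the serialization order. -/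
variable {Client Obj Val : Type*}

/-- if `ROT` returns `WOT`'s value `y` for `Y`, then `WOT`
precedes `ROT` in every serialization for `C_r`, the value `a` read for `X`
is not `⊥`, and the last transaction preceding `ROT` writing on `X` is `WOT`
or follows `WOT`. -/
theorem stmt_1 {Client Obj Val : Type*} (bot : Val)
    (H : History Client Obj Val) (hU : UniqueWrites H bot)
    (WOT : Tx Obj Val) (hWOT : TxIn H WOT)
    (X Y : Obj) (x y : Val) (hXY : X ≠ Y)
    (hw : WOT.writes = {(X, x), (Y, y)})
    (Cr : Client) (ROT : Tx Obj Val) (hROT : ROT ∈ H.locals Cr)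
    (a : Val)
    (hra : (X, a) ∈ ROT.reads) (hry : (Y, y) ∈ ROT.reads)
    (lt : Tx Obj Val → Tx Obj Val → Prop)
    (hser : IsCausalSerialization H bot Cr lt) :
    lt WOT ROT ∧ a ≠ bot ∧
      ∀ W ∈ Dom H Cr, lt W ROT → WritesOn W X →
        (∀ W' ∈ Dom H Cr, lt W' ROT → WritesOn W' X → W' = W ∨ lt W' W) →
        (W = WOT ∨ lt WOT W) := by
  have hwY : (Y, y) ∈ WOT.writes := by rw [hw]; right; rfl
  have hwX : (X, x) ∈ WOT.writes := by rw [hw]; left; rfl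
  have hWdom : WOT ∈ Dom H Cr := Or.inl ⟨hWOT, ⟨(X, x), hwX⟩⟩
  have hRdom : ROT ∈ Dom H Cr := Or.inr hROT
  have hRin : TxIn H ROT := ⟨Cr, hROT⟩
  have hc : Causal H WOT ROT := Causal.readFrom hWOT hRin hwY hry
  have hlt : lt WOT ROT := hser.causal_lt WOT hWdom ROT hRdom hc
  refine ⟨hlt, ?_, ?_⟩
  · intro hab
    subst hab
    exact hser.read_bot ROT hRdom X hra WOT hWdom hlt ⟨x, hwX⟩
  · intro W hWd hWlt hWX hmax
    rcases hmax WOT hWdom hlt ⟨x, hwX⟩ with h | h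
    · exact Or.inl h.symm
    · exact Or.inr h
end

section
/- Let H be a history satisfying uniqueness of written values. Suppose the local history of a client C contains a transaction W_x whose only event is the write w(X)x, and strictly later a transaction W_y whose only event is the write w(Y)y, where X and Y are distinct objects (so W_x causally precedes W_y). Suppose H also contains a transaction W* containing a write event w(X)x* with x* ≠ x. Suppose the local history of a client C_r contains a transaction ROT with read events r(X)x* and r(Y)y, and strictly later a transaction ROT1 with read events r(X)x and r(Y)y. Then there exists no transactional causal serialization for C_r of H. -/
variable {Client Obj Val : Type*}

/-- if `ROT` returns a stale value `x* ≠ x` for `X` together with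
`y` for `Y` (where `w(X)x` causally precedes `w(Y)y`), and a later `ROT1`
returns `(x, y)`, then no transactional causal serialization for `C_r`
exists. -/
theorem stmt_2 {Client Obj Val : Type*} (bot : Val)
    (H : History Client Obj Val) (hU : UniqueWrites H bot)
    (C : Client) (Wx Wy : Tx Obj Val)
    (X Y : Obj) (x y : Val) (hXY : X ≠ Y)
    (hWxr : Wx.reads = ∅) (hWxw : Wx.writes = {(X, x)})
    (hWyr : Wy.reads = ∅) (hWyw : Wy.writes = {(Y, y)})
    (hC : LocBefore H C Wx Wy)
    (Wstar : Tx Obj Val) (hWstar : TxIn H Wstar)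
    (xstar : Val) (hws : (X, xstar) ∈ Wstar.writes) (hxs : xstar ≠ x)
    (Cr : Client) (ROT ROT1 : Tx Obj Val)
    (hord : LocBefore H Cr ROT ROT1)
    (hrs : (X, xstar) ∈ ROT.reads) (hry : (Y, y) ∈ ROT.reads)
    (hr1x : (X, x) ∈ ROT1.reads) (hr1y : (Y, y) ∈ ROT1.reads) :
    ¬ ∃ lt : Tx Obj Val → Tx Obj Val → Prop,
        IsCausalSerialization H bot Cr lt := by
  rintro ⟨lt, hS⟩
  -- Memberships
  obtain ⟨i, j, hij, hi, hj⟩ := hC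
  have hWxIn : TxIn H Wx := ⟨C, List.mem_of_getElem? hi⟩
  have hWyIn : TxIn H Wy := ⟨C, List.mem_of_getElem? hj⟩
  obtain ⟨i', j', hij', hi', hj'⟩ := hord
  have hROTmem : ROT ∈ H.locals Cr := List.mem_of_getElem? hi'
  have hROT1mem : ROT1 ∈ H.locals Cr := List.mem_of_getElem? hj'
  have hROTIn : TxIn H ROT := ⟨Cr, hROTmem⟩
  have hROT1In : TxIn H ROT1 := ⟨Cr, hROT1mem⟩
  have hWxwmem : (X, x) ∈ Wx.writes := by rw [hWxw]; rfl
  have hWywmem : (Y, y) ∈ Wy.writes := by rw [hWyw]; rfl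
  have hWxD : Wx ∈ Dom H Cr := Or.inl ⟨hWxIn, ⟨_, hWxwmem⟩⟩
  have hWyD : Wy ∈ Dom H Cr := Or.inl ⟨hWyIn, ⟨_, hWywmem⟩⟩
  have hROTD : ROT ∈ Dom H Cr := Or.inr hROTmem
  have hROT1D : ROT1 ∈ Dom H Cr := Or.inr hROT1mem
  -- values distinct from bot
  have hxbot : x ≠ bot := hU.1 Wx hWxIn X x hWxwmem
  have hxsbot : xstar ≠ bot := hU.1 Wstar hWstar X xstar hws
  -- causality
  have hCauWxWy : Causal H Wx Wy := Causal.prog C ⟨i, j, hij, hi, hj⟩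
  have hCauWyROT : Causal H Wy ROT := Causal.readFrom hWyIn hROTIn hWywmem hry
  have hCauROT : Causal H ROT ROT1 := Causal.prog Cr ⟨i', j', hij', hi', hj'⟩
  have hltWxROT : lt Wx ROT :=
    hS.causal_lt Wx hWxD ROT hROTD (Causal.trans hCauWxWy hCauWyROT)
  have hltROT : lt ROT ROT1 := hS.causal_lt ROT hROTD ROT1 hROT1D hCauROT
  -- last writer for ROT's read of (X, xstar)
  obtain ⟨W, hWD, hltWROT, hWw, hWmax⟩ := hS.read_val ROT hROTD X xstar hrs hxsbot
  have hWneWx : W ≠ Wx := by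
    intro h
    apply hxs
    have : (X, xstar) = (X, x) := by
      have := hWw
      rw [h, hWxw] at this
      exact this
    exact (Prod.mk.injEq .. ▸ this).2
  have hltWxW : lt Wx W := by
    rcases hWmax Wx hWxD hltWxROT ⟨x, hWxwmem⟩ with h | h
    · exact absurd h.symm hWneWx
    · exact h
  -- last writer for ROT1's read of (X, x)
  obtain ⟨W1, hW1D, hltW1ROT1, hW1w, hW1max⟩ := hS.read_val ROT1 hROT1D X x hr1x hxbot
  have hW1In : TxIn H W1 := by
    rcases hW1D with ⟨h, _⟩ | h
    · exact h
    · exact ⟨Cr, h⟩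
  have hW1eq : W1 = Wx := (hU.2 W1 Wx hW1In hWxIn X X x hW1w hWxwmem).1
  have hltWROT1 : lt W ROT1 := hS.trans W hWD ROT hROTD ROT1 hROT1D hltWROT hltROT
  rcases hW1max W hWD hltWROT1 ⟨xstar, hWw⟩ with h | h
  · exact hWneWx (h.trans hW1eq)
  · rw [hW1eq] at h
    exact hS.irrefl W hWD (hS.trans W hWD Wx hWxD W hWD h hltWxW)
end

section
/- Let H be a history satisfying uniqueness of written values. Suppose the local history of a client C contains, in this order, transactions W_1, W_2, ..., W_n (n ≥ 2), where the only event of W_i is the write w(o_i)v_i and the objects o_1, ..., o_n are pairwise distinct (so W_1 causally precedes each W_k for k ≥ 2). Suppose H also contains a transaction W* containing a write event w(o_1)v*_1 with v*_1 ≠ v_1. Fix k with 2 ≤ k ≤ n, and suppose the local history of a client C_r contains a transaction ROT with read events r(o_1)v*_1 and r(o_k)v_k, and strictly later a transaction ROT1 with read events r(o_1)v_1 and r(o_k)v_k. Then there exists no transactional causal serialization for C_r of H. -/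
variable {Client Obj Val : Type*}

/-- generalization of Statement 2 to a causal chain of writes
`w(o_1)v_1, …, w(o_n)v_n` by one client: if `ROT` returns a stale value
`v*_1 ≠ v_1` for `o_1` together with `v_k` for `o_k` (`2 ≤ k ≤ n`), and a
later `ROT1` returns `(v_1, v_k)`, then no transactional causal serialization
for `C_r` exists. -/
theorem stmt_3 {Client Obj Val : Type*} (bot : Val)
    (H : History Client Obj Val) (hU : UniqueWrites H bot)
    (C : Client) (n : ℕ) (hn : 2 ≤ n)
    (W : Fin n → Tx Obj Val) (o : Fin n → Obj) (v : Fin n → Val)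
    (ho : Function.Injective o)
    (hWr : ∀ i, (W i).reads = ∅) (hWw : ∀ i, (W i).writes = {(o i, v i)})
    (pos : Fin n → ℕ) (hpos : StrictMono pos)
    (hloc : ∀ i, (H.locals C)[pos i]? = some (W i))
    (Wstar : Tx Obj Val) (hWstar : TxIn H Wstar)
    (vstar : Val) (hws : (o ⟨0, by omega⟩, vstar) ∈ Wstar.writes)
    (hvs : vstar ≠ v ⟨0, by omega⟩)
    (k : Fin n) (hk : 0 < k.val)
    (Cr : Client) (ROT ROT1 : Tx Obj Val)
    (hord : LocBefore H Cr ROT ROT1)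
    (hrs : (o ⟨0, by omega⟩, vstar) ∈ ROT.reads)
    (hrk : (o k, v k) ∈ ROT.reads)
    (hr1 : (o ⟨0, by omega⟩, v ⟨0, by omega⟩) ∈ ROT1.reads)
    (hr1k : (o k, v k) ∈ ROT1.reads) :
    ¬ ∃ lt : Tx Obj Val → Tx Obj Val → Prop,
        IsCausalSerialization H bot Cr lt := by
  rintro ⟨lt, hS⟩
  set i0 : Fin n := ⟨0, by omega⟩ with hi0
  -- basic facts
  have hmemROT : ROT ∈ H.locals Cr := by
    obtain ⟨i, j, hij, hi, hj⟩ := hord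
    obtain ⟨h, hi'⟩ := List.getElem?_eq_some_iff.mp hi
    exact hi' ▸ List.getElem_mem h
  have hmemROT1 : ROT1 ∈ H.locals Cr := by
    obtain ⟨i, j, hij, hi, hj⟩ := hord
    obtain ⟨h, hj'⟩ := List.getElem?_eq_some_iff.mp hj
    exact hj' ▸ List.getElem_mem h
  have hTxW : ∀ i : Fin n, TxIn H (W i) := by
    intro i
    obtain ⟨h, hi'⟩ := List.getElem?_eq_some_iff.mp (hloc i)
    exact ⟨C, hi' ▸ List.getElem_mem h⟩
  have hWwmem : ∀ i : Fin n, (o i, v i) ∈ (W i).writes := by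
    intro i; rw [hWw i]; rfl
  have hDomW : ∀ i : Fin n, W i ∈ Dom H C := fun i =>
    Or.inl ⟨hTxW i, ⟨_, hWwmem i⟩⟩
  have hDomWCr : ∀ i : Fin n, W i ∈ Dom H Cr := fun i =>
    Or.inl ⟨hTxW i, ⟨_, hWwmem i⟩⟩
  have hDomStar : Wstar ∈ Dom H Cr := Or.inl ⟨hWstar, ⟨_, hws⟩⟩
  have hDomROT : ROT ∈ Dom H Cr := Or.inr hmemROT
  have hDomROT1 : ROT1 ∈ Dom H Cr := Or.inr hmemROT1
  have hTxInOfDom : ∀ T, T ∈ Dom H Cr → TxIn H T := by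
    rintro T (⟨h, -⟩ | h); · exact h
    · exact ⟨Cr, h⟩
  -- Causal W i0 → ROT
  have hC0k : Causal H (W i0) (W k) := by
    apply Causal.prog C
    exact ⟨pos i0, pos k, hpos (by exact Fin.mk_lt_mk.mpr hk ), hloc i0, hloc k⟩
  have hCkR : Causal H (W k) ROT :=
    Causal.readFrom (hTxW k) ⟨Cr, hmemROT⟩ (hWwmem k) hrk
  have hC0R : Causal H (W i0) ROT := Causal.trans hC0k hCkR
  have hlt0R : lt (W i0) ROT := hS.causal_lt _ (hDomWCr i0) _ hDomROT hC0R
  -- values ≠ bot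
  have hv0bot : v i0 ≠ bot := hU.1 _ (hTxW i0) _ _ (hWwmem i0)
  have hvsbot : vstar ≠ bot := hU.1 _ hWstar _ _ hws
  -- read_val for ROT reading (o i0, vstar)
  obtain ⟨Wa, hWaDom, hWaR, hWaw, hWalast⟩ :=
    hS.read_val _ hDomROT _ _ hrs hvsbot
  have hW0ne : W i0 ≠ Wstar := by
    intro h
    have hm : (o i0, vstar) ∈ (W i0).writes := h ▸ hws
    rw [hWw i0, Set.mem_singleton_iff, Prod.mk.injEq] at hm
    exact hvs hm.2
  have hWaStar : Wa = Wstar := by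
    exact (hU.2 Wa Wstar (hTxInOfDom _ hWaDom) hWstar _ _ _ hWaw hws).1
  rw [hWaStar] at hWaR hWaw hWalast hWaDom
  have hlt0s : lt (W i0) Wstar := by
    rcases hWalast _ (hDomWCr i0) hlt0R ⟨_, hWwmem i0⟩ with h | h
    · exact absurd h hW0ne
    · exact h
  -- read_val for ROT1 reading (o i0, v i0)
  obtain ⟨Wb, hWbDom, hWbR, hWbw, hWblast⟩ :=
    hS.read_val _ hDomROT1 _ _ hr1 hv0bot
  have hWb0 : Wb = W i0 :=
    (hU.2 Wb (W i0) (hTxInOfDom _ hWbDom) (hTxW i0) _ _ _ hWbw (hWwmem i0)).1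
  rw [hWb0] at hWbR hWbw hWblast hWbDom
  -- Causal Wstar → ROT1
  have hCsR : Causal H Wstar ROT :=
    Causal.readFrom hWstar ⟨Cr, hmemROT⟩ hws hrs
  have hCsR1 : Causal H Wstar ROT1 :=
    Causal.trans hCsR (Causal.prog Cr hord)
  have hltsR1 : lt Wstar ROT1 := hS.causal_lt _ hDomStar _ hDomROT1 hCsR1
  have hlts0 : lt Wstar (W i0) := by
    rcases hWblast _ hDomStar hltsR1 ⟨_, hws⟩ with h | h
    · exact absurd h.symm hW0ne
    · exact h
  exact hS.irrefl _ (hDomWCr i0) (hS.trans _ (hDomWCr i0) _ hDomStar _ (hDomWCr i0) hlt0s hlts0)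
end

section
/- Let H be a history satisfying uniqueness of written values, containing a transaction WOT whose write events are exactly w(o_1)x_1, ..., w(o_n)x_n for pairwise distinct objects o_1, ..., o_n (n ≥ 2). Suppose the local history of a client C_r contains a transaction ROT with read events r(o_i)a_i for every i ∈ {1, ..., n}, and strictly later a transaction ROT2 with read events r(o_i)x_i for every i ∈ {1, ..., n}. If a transactional causal serialization for C_r of H exists, then either a_i = x_i for all i, or a_i ≠ x_i for all i; that is, a read-only transaction returning the value written by WOT to one of the objects must return the value written by WOT to every one of the objects. -/
variable {Client Obj Val : Type*}

/-- a read-only transaction returning the value written by `WOT`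
to one of the objects must return the value written by `WOT` to every one of
the objects. -/
theorem stmt_4 {Client Obj Val : Type*} (bot : Val)
    (H : History Client Obj Val) (hU : UniqueWrites H bot)
    (WOT : Tx Obj Val) (hWOT : TxIn H WOT)
    (n : ℕ) (hn : 2 ≤ n)
    (o : Fin n → Obj) (ho : Function.Injective o)
    (x a : Fin n → Val)
    (hw : WOT.writes = Set.range fun i => (o i, x i))
    (Cr : Client) (ROT ROT2 : Tx Obj Val)
    (hord : LocBefore H Cr ROT ROT2)
    (hra : ∀ i, (o i, a i) ∈ ROT.reads)
    (hr2 : ∀ i, (o i, x i) ∈ ROT2.reads) :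
    (∃ lt : Tx Obj Val → Tx Obj Val → Prop,
        IsCausalSerialization H bot Cr lt) →
      (∀ i, a i = x i) ∨ (∀ i, a i ≠ x i) := by
  rintro ⟨lt, hS⟩
  by_contra hcon
  push_neg at hcon
  obtain ⟨⟨j, hj⟩, i, hi⟩ := hcon
  obtain ⟨pi, pj, hpij, hgi, hgj⟩ := hord
  have hmemROT : ROT ∈ H.locals Cr := List.mem_iff_getElem?.mpr ⟨pi, hgi⟩
  have hmemROT2 : ROT2 ∈ H.locals Cr := List.mem_iff_getElem?.mpr ⟨pj, hgj⟩
  have hDomROT : ROT ∈ Dom H Cr := Or.inr hmemROT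
  have hDomROT2 : ROT2 ∈ Dom H Cr := Or.inr hmemROT2
  have hTxROT : TxIn H ROT := ⟨Cr, hmemROT⟩
  have hTxROT2 : TxIn H ROT2 := ⟨Cr, hmemROT2⟩
  have hWj : (o j, x j) ∈ WOT.writes := by rw [hw]; exact ⟨j, rfl⟩
  have hWi : (o i, x i) ∈ WOT.writes := by rw [hw]; exact ⟨i, rfl⟩
  have hDomWOT : WOT ∈ Dom H Cr := Or.inl ⟨hWOT, ⟨(o j, x j), hWj⟩⟩
  have hrai : (o i, x i) ∈ ROT.reads := hi ▸ hra i
  have hCWR : Causal H WOT ROT := .readFrom hWOT hTxROT hWi hrai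
  have hltWR : lt WOT ROT := hS.causal_lt WOT hDomWOT ROT hDomROT hCWR
  by_cases haj : a j = bot
  · exact hS.read_bot ROT hDomROT (o j) (haj ▸ hra j) WOT hDomWOT hltWR ⟨x j, hWj⟩
  · obtain ⟨W, hWDom, hltWROT, hWw, hmax⟩ :=
      hS.read_val ROT hDomROT (o j) (a j) (hra j) haj
    have hne : W ≠ WOT := by
      rintro rfl
      rw [hw] at hWw
      obtain ⟨k, hk⟩ := hWw
      obtain ⟨hk1, hk2⟩ := Prod.mk.injEq .. ▸ hk
      exact hj (hk2 ▸ (ho hk1) ▸ rfl)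
    have hltWOTW : lt WOT W := by
      rcases hmax WOT hDomWOT hltWR ⟨x j, hWj⟩ with h | h
      · exact absurd h.symm hne
      · exact h
    have hTxW : TxIn H W := by
      rcases hWDom with h | h
      · exact h.1
      · exact ⟨Cr, h⟩
    have hCW2 : Causal H W ROT2 :=
      .trans (.readFrom hTxW hTxROT hWw (hra j)) (.prog Cr ⟨pi, pj, hpij, hgi, hgj⟩)
    have hltWROT2 : lt W ROT2 := hS.causal_lt W hWDom ROT2 hDomROT2 hCW2
    have hxb : x j ≠ bot := hU.1 WOT hWOT (o j) (x j) hWj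
    obtain ⟨W2, hW2Dom, hltW2, hW2w, hmax2⟩ :=
      hS.read_val ROT2 hDomROT2 (o j) (x j) (hr2 j) hxb
    have hTxW2 : TxIn H W2 := by
      rcases hW2Dom with h | h
      · exact h.1
      · exact ⟨Cr, h⟩
    have hW2eq : W2 = WOT := (hU.2 W2 WOT hTxW2 hWOT (o j) (o j) (x j) hW2w hWj).1
    rw [hW2eq] at hmax2
    rcases hmax2 W hWDom hltWROT2 ⟨a j, hWw⟩ with h | h
    · exact hne h
    · exact hS.irrefl WOT hDomWOT (hS.trans WOT hDomWOT W hWDom WOT hDomWOT hltWOTW h)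
end

section
/- Let H be a history satisfying uniqueness of written values. Suppose the local history of a client C contains a transaction T1 with a read event r(x)v1 and, strictly later, a transaction T2 with a read event r(x)v2, where v1 ≠ ⊥ and v2 ≠ ⊥. Let W1 be the transaction of H containing the write event w(x)v1 and W2 the transaction containing the write event w(x)v2. Then in every transactional causal serialization for C of H, W2 does not strictly precede W1 in the serialization order; i.e., a later transaction of the same client cannot return a value for x whose writing transaction is serialized strictly before the writing transaction of the value returned earlier. -/
variable {Client Obj Val : Type*}

/-- a later transaction of the same client cannot return a value
for `x` whose writing transaction is serialized strictly before the writing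
transaction of the value returned earlier. -/
theorem stmt_5 {Client Obj Val : Type*} (bot : Val)
    (H : History Client Obj Val) (hU : UniqueWrites H bot)
    (C : Client) (T1 T2 : Tx Obj Val)
    (hord : LocBefore H C T1 T2)
    (x : Obj) (v1 v2 : Val) (hv1 : v1 ≠ bot) (hv2 : v2 ≠ bot)
    (hr1 : (x, v1) ∈ T1.reads) (hr2 : (x, v2) ∈ T2.reads)
    (W1 W2 : Tx Obj Val) (hW1 : TxIn H W1) (hW2 : TxIn H W2)
    (hw1 : (x, v1) ∈ W1.writes) (hw2 : (x, v2) ∈ W2.writes)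
    (lt : Tx Obj Val → Tx Obj Val → Prop)
    (hser : IsCausalSerialization H bot C lt) :
    ¬ lt W2 W1 := by
  intro hlt
  obtain ⟨i, j, hij, hi, hj⟩ := hord
  have hT1mem : T1 ∈ H.locals C := by
    have := List.getElem?_eq_some_iff.mp hi
    obtain ⟨h, rfl⟩ := this
    exact List.getElem_mem _
  have hT2mem : T2 ∈ H.locals C := by
    have := List.getElem?_eq_some_iff.mp hj
    obtain ⟨h, rfl⟩ := this
    exact List.getElem_mem _
  have hT1in : TxIn H T1 := ⟨C, hT1mem⟩
  have hT2in : TxIn H T2 := ⟨C, hT2mem⟩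
  have hT1dom : T1 ∈ Dom H C := Or.inr hT1mem
  have hT2dom : T2 ∈ Dom H C := Or.inr hT2mem
  have hW1dom : W1 ∈ Dom H C := Or.inl ⟨hW1, ⟨(x, v1), hw1⟩⟩
  have hW2dom : W2 ∈ Dom H C := Or.inl ⟨hW2, ⟨(x, v2), hw2⟩⟩
  have txInOfDom : ∀ T ∈ Dom H C, TxIn H T := by
    rintro T (⟨h, _⟩ | h)
    · exact h
    · exact ⟨C, h⟩
  -- read_val on T2 gives the maximal writer W, which must be W2
  obtain ⟨W, hWdom, hWlt, hWw, hWmax⟩ := hser.read_val T2 hT2dom x v2 hr2 hv2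
  have hWeq : W = W2 := (hU.2 W W2 (txInOfDom W hWdom) hW2 x x v2 hWw hw2).1
  subst hWeq
  -- W1 causally precedes T2
  have hc : Causal H W1 T2 :=
    Causal.trans (Causal.readFrom hW1 hT1in hw1 hr1)
      (Causal.prog C ⟨i, j, hij, hi, hj⟩)
  have hW1T2 : lt W1 T2 := hser.causal_lt W1 hW1dom T2 hT2dom hc
  rcases hWmax W1 hW1dom hW1T2 ⟨v1, hw1⟩ with rfl | h
  · exact hser.irrefl W1 hW1dom hlt
  · exact hser.irrefl W1 hW1dom (hser.trans W1 hW1dom W hWdom W1 hW1dom h hlt)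
end

section
/- Let H be a history satisfying uniqueness of written values, and suppose each transaction T of H is assigned a real timestamp ts(T), with all assigned timestamps pairwise distinct, such that: (a) timestamps strictly increase along each client's local history; (b) for every read event r(x)v with v ≠ ⊥ in a transaction T, the transaction W of H containing the write event w(x)v satisfies ts(W) < ts(T), and there is no transaction W' containing a write event on x with ts(W) < ts(W') < ts(T); and (c) for every read event r(x)⊥ in a transaction T, no transaction containing a write event on x has timestamp strictly less than ts(T). Then for every client C, the strict order comparing transactions by their timestamps is a transactional causal serialization for C of H. (This is the correctness, at the level of serializations, of the timestamp-based implementation: serializing all operations by accurate timestamps yields causal consistency.) -/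
variable {Client Obj Val : Type*}

/-- correctness of the timestamp-based implementation at the
level of serializations — comparing transactions by accurate timestamps
yields a transactional causal serialization for every client. -/
theorem stmt_6 {Client Obj Val : Type*} (bot : Val)
    (H : History Client Obj Val) (hU : UniqueWrites H bot)
    (ts : Tx Obj Val → ℝ)
    (hdist : ∀ T T', TxIn H T → TxIn H T' → T ≠ T' → ts T ≠ ts T')
    (hprog : ∀ (c : Client) (S T : Tx Obj Val), LocBefore H c S T → ts S < ts T)
    (hread : ∀ T, TxIn H T → ∀ x v, (x, v) ∈ T.reads → v ≠ bot →
      ∃ W, TxIn H W ∧ (x, v) ∈ W.writes ∧ ts W < ts T ∧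
        ∀ W', TxIn H W' → WritesOn W' x → ¬ (ts W < ts W' ∧ ts W' < ts T))
    (hbot : ∀ T, TxIn H T → ∀ x, (x, bot) ∈ T.reads →
      ∀ W, TxIn H W → WritesOn W x → ¬ ts W < ts T) :
    ∀ C : Client, IsCausalSerialization H bot C (fun S T => ts S < ts T) := by
  intro C
  have hDomIn : ∀ T ∈ Dom H C, TxIn H T := by
    rintro T (⟨hT, _⟩ | hT)
    · exact hT
    · exact ⟨C, hT⟩
  have hcausal : ∀ S T, Causal H S T → ts S < ts T := by
    intro S T h
    induction h with
    | prog c h => exact hprog c _ _ h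
    | readFrom hS hT hw hr =>
        rename_i S' T' x v
        have hv : v ≠ bot := hU.1 _ hS _ _ hw
        obtain ⟨W, hWin, hWw, hlt, _⟩ := hread _ hT _ _ hr hv
        obtain ⟨heq, -⟩ := hU.2 W S' hWin hS _ _ _ hWw hw
        exact heq ▸ hlt
    | trans _ _ ih1 ih2 => exact lt_trans ih1 ih2
  refine ⟨?_, ?_, ?_, ?_, ?_, ?_⟩
  · intro T _; exact lt_irrefl _
  · intro S _ T _ U _ h1 h2; exact lt_trans h1 h2
  · intro S hS T hT hne
    exact lt_or_gt_of_ne (hdist S T (hDomIn S hS) (hDomIn T hT) hne)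
  · intro T hT x v hr hv
    obtain ⟨W, hWin, hWw, hlt, hlast⟩ := hread _ (hDomIn T hT) _ _ hr hv
    refine ⟨W, Or.inl ⟨hWin, ⟨(x, v), hWw⟩⟩, hlt, hWw, ?_⟩
    intro W' hW' hltW' hwo
    by_cases heq : W' = W
    · exact Or.inl heq
    · right
      have hne := hdist W' W (hDomIn W' hW') hWin heq
      rcases lt_or_gt_of_ne hne with h | h
      · exact h
      · exact absurd ⟨h, hltW'⟩ (hlast W' (hDomIn W' hW') hwo)
  · intro T hT x hr W hW hlt hwo
    exact hbot T (hDomIn T hT) x hr W (hDomIn W hW) hwo hlt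
  · intro S _ T _ h; exact hcausal S T h
end
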